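/- arXiv:2410.16940 — 3 statements merged into one kernel-verified Lean document; each statement's English description precedes it below -/
import Mathlib

section
/- Let P be a nonempty finite set of primes with product P̄, and let n be a positive integer with gcd(n, P̄²) > 1. Then G_α(n) := ∑_{k | gcd(n, P̄²)} σ_α(n/k) · (μ ∗ μN^α)(k) = 0. -/
open scoped BigOperators

noncomputable def sigmaC (α : ℂ) (n : ℕ) : ℂ := ∑ d ∈ n.divisors, (d : ℂ) ^ α

noncomputable def muC (n : ℕ) : ℂ := (ArithmeticFunction.moebius n : ℤ)

noncomputable def dconv (f g : ℕ → ℂ) (n : ℕ) : ℂ :=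
  ∑ d ∈ n.divisors, f d * g (n / d)

noncomputable def muMuN (α : ℂ) : ℕ → ℂ :=
  dconv muC (fun n => muC n * (n : ℂ) ^ α)

open ArithmeticFunction Finset

noncomputable def powA (α : ℂ) : ArithmeticFunction ℂ :=
  ⟨fun n => if n = 0 then 0 else (n : ℂ) ^ α, if_pos rfl⟩

lemma powA_apply {α : ℂ} {n : ℕ} (hn : n ≠ 0) : powA α n = (n : ℂ) ^ α := if_neg hn

lemma natCast_cpow_mul {m k : ℕ} (α : ℂ) :
    ((m * k : ℕ) : ℂ) ^ α = ((m : ℕ) : ℂ) ^ α * ((k : ℕ) : ℂ) ^ α := by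
  have := Complex.mul_cpow_ofReal_nonneg (Nat.cast_nonneg m) (Nat.cast_nonneg k) α
  push_cast at this ⊢
  exact this

lemma powA_mult (α : ℂ) : (powA α).IsMultiplicative := by
  constructor
  · show (if (1 : ℕ) = 0 then 0 else ((1 : ℕ) : ℂ) ^ α) = 1
    simp
  · intro m k h
    rcases eq_or_ne m 0 with rfl | hm
    · rw [Nat.coprime_zero_left] at h; subst h; simp [powA]
    rcases eq_or_ne k 0 with rfl | hk
    · rw [Nat.coprime_zero_right] at h; subst h; simp [powA]
    rw [powA_apply (mul_ne_zero hm hk), powA_apply hm, powA_apply hk, natCast_cpow_mul]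

noncomputable def muA : ArithmeticFunction ℂ := ((ArithmeticFunction.moebius : ArithmeticFunction ℤ) : ArithmeticFunction ℂ)

lemma muA_apply (n : ℕ) : muA n = muC n := by simp [muA, muC]

noncomputable def hA (α : ℂ) : ArithmeticFunction ℂ := muA * (muA.pmul (powA α))

lemma hA_mult (α : ℂ) : (hA α).IsMultiplicative :=
  (isMultiplicative_moebius.intCast).mul
    ((isMultiplicative_moebius.intCast).pmul (powA_mult α))

lemma hA_eq {α : ℂ} {k : ℕ} (hk : k ≠ 0) : hA α k = muMuN α k := by
  rw [hA, mul_apply,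
    Nat.sum_divisorsAntidiagonal (f := fun d e => muA d * (muA.pmul (powA α)) e)]
  unfold muMuN dconv
  refine Finset.sum_congr rfl fun d hd => ?_
  have hd' : k / d ≠ 0 := by
    rcases Nat.mem_divisors.mp hd with ⟨hdvd, -⟩
    exact (Nat.div_pos (Nat.le_of_dvd (Nat.pos_of_ne_zero hk) hdvd)
      (Nat.pos_of_mem_divisors hd)).ne'
  rw [pmul_apply, powA_apply hd', muA_apply, muA_apply]

lemma muMuN_mult {α : ℂ} {a b : ℕ} (ha : a ≠ 0) (hb : b ≠ 0) (h : a.Coprime b) :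
    muMuN α (a * b) = muMuN α a * muMuN α b := by
  rw [← hA_eq (mul_ne_zero ha hb), ← hA_eq ha, ← hA_eq hb,
    (hA_mult α).map_mul_of_coprime h]

noncomputable def sigA (α : ℂ) : ArithmeticFunction ℂ :=
  ((ArithmeticFunction.zeta : ArithmeticFunction ℕ) : ArithmeticFunction ℂ) * powA α

lemma sigA_eq {α : ℂ} {n : ℕ} (hn : n ≠ 0) : sigA α n = sigmaC α n := by
  rw [sigA, mul_apply,
    Nat.sum_divisorsAntidiagonal (f := fun d e =>
      ((ArithmeticFunction.zeta : ArithmeticFunction ℕ) : ArithmeticFunction ℂ) d * powA α e)]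
  have : ∀ d ∈ n.divisors,
      ((ArithmeticFunction.zeta : ArithmeticFunction ℕ) : ArithmeticFunction ℂ) d * powA α (n / d)
        = ((n / d : ℕ) : ℂ) ^ α := by
    intro d hd
    rcases Nat.mem_divisors.mp hd with ⟨hdvd, -⟩
    have hd0 : d ≠ 0 := fun h => by subst h; exact hn (Nat.eq_zero_of_zero_dvd hdvd)
    have hnd : n / d ≠ 0 := (Nat.div_pos (Nat.le_of_dvd (Nat.pos_of_ne_zero hn) hdvd)
      (Nat.pos_of_mem_divisors hd)).ne'
    rw [natCoe_apply, zeta_apply, if_neg hd0, powA_apply hnd]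
    push_cast; ring
  rw [Finset.sum_congr rfl this]
  unfold sigmaC
  exact Nat.sum_div_divisors n (fun d => ((d : ℕ) : ℂ) ^ α)

lemma sigmaC_mult {α : ℂ} {a b : ℕ} (ha : a ≠ 0) (hb : b ≠ 0) (h : a.Coprime b) :
    sigmaC α (a * b) = sigmaC α a * sigmaC α b := by
  rw [← sigA_eq (mul_ne_zero ha hb), ← sigA_eq ha, ← sigA_eq hb]
  exact (isMultiplicative_zeta.natCast.mul (powA_mult α)).map_mul_of_coprime h

lemma sum_divisors_coprime_mul {m t : ℕ} (h : m.Coprime t) (F : ℕ → ℂ) :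
    ∑ k ∈ (m * t).divisors, F k = ∑ b ∈ m.divisors, ∑ c ∈ t.divisors, F (b * c) := by
  rw [Nat.divisors_mul, Finset.mul_def, Finset.sum_image, Finset.sum_product]
  rintro ⟨b₁, c₁⟩ h₁ ⟨b₂, c₂⟩ h₂ heq
  simp only [Finset.mem_coe, Finset.mem_product, Nat.mem_divisors] at h₁ h₂
  obtain ⟨⟨hb₁, hm⟩, ⟨hc₁, ht⟩⟩ := h₁
  obtain ⟨⟨hb₂, -⟩, ⟨hc₂, -⟩⟩ := h₂
  simp only at heq
  have key : ∀ {x y u v : ℕ}, x ∣ m → y ∣ t → u ∣ m → v ∣ t → x * y = u * v → x ∣ u := by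
    intro x y u v hx hy hu hv hxy
    have hco : x.Coprime v := (Nat.Coprime.coprime_dvd_left hx h).coprime_dvd_right hv
    exact hco.dvd_of_dvd_mul_right (hxy ▸ Dvd.intro y rfl)
  have hb : b₁ = b₂ := Nat.dvd_antisymm (key hb₁ hc₁ hb₂ hc₂ heq) (key hb₂ hc₂ hb₁ hc₁ heq.symm)
  subst hb
  have hb0 : 0 < b₁ := Nat.pos_of_ne_zero (fun h0 => hm (by simpa [h0] using hb₁))
  have hc : c₁ = c₂ := Nat.eq_of_mul_eq_mul_left hb0 heq
  rw [hc]

lemma muMuN_one (α : ℂ) : muMuN α 1 = 1 := by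
  simp [muMuN, dconv, muC]

lemma muC_one : muC 1 = 1 := by simp [muC]

lemma muC_prime {p : ℕ} (hp : p.Prime) : muC p = -1 := by
  simp [muC, ArithmeticFunction.moebius_apply_prime hp]

lemma one_cpow_nat (α : ℂ) : ((1 : ℕ) : ℂ) ^ α = 1 := by norm_num

lemma muMuN_prime {α : ℂ} {p : ℕ} (hp : p.Prime) : muMuN α p = -(1 + (p : ℂ) ^ α) := by
  unfold muMuN dconv
  rw [hp.divisors, Finset.sum_insert (by simp [hp.one_lt.ne]), Finset.sum_singleton,
    Nat.div_one, Nat.div_self hp.pos]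
  simp only [muC_one, muC_prime hp, one_cpow_nat]
  ring

lemma muMuN_prime_sq {α : ℂ} {p : ℕ} (hp : p.Prime) : muMuN α (p ^ 2) = (p : ℂ) ^ α := by
  unfold muMuN dconv
  rw [Nat.sum_divisors_prime_pow hp]
  rw [Finset.sum_range_succ, Finset.sum_range_succ, Finset.sum_range_succ,
    Finset.sum_range_zero]
  have h0 : p ^ 2 / p ^ 0 = p ^ 2 := by simp
  have h1 : p ^ 2 / p ^ 1 = p := by rw [pow_one, pow_two, Nat.mul_div_cancel_left _ hp.pos]
  have h2 : p ^ 2 / p ^ 2 = 1 := Nat.div_self (pow_pos hp.pos 2)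
  have hmu2 : muC (p ^ 2) = 0 := by
    simp [muC, ArithmeticFunction.moebius_apply_prime_pow hp (two_ne_zero)]
  rw [h0, h1, h2, pow_zero, pow_one]
  simp only [muC_one, muC_prime hp, hmu2, one_cpow_nat]
  ring

lemma sigmaC_one (α : ℂ) : sigmaC α 1 = 1 := by
  unfold sigmaC
  rw [Nat.divisors_one, Finset.sum_singleton, one_cpow_nat]

lemma sigmaC_prime {α : ℂ} {p : ℕ} (hp : p.Prime) : sigmaC α p = 1 + (p : ℂ) ^ α := by
  unfold sigmaC
  rw [hp.divisors, Finset.sum_insert (by simp [hp.one_lt.ne]), Finset.sum_singleton,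
    one_cpow_nat]

lemma sigmaC_prime_pow {α : ℂ} {p : ℕ} (hp : p.Prime) (j : ℕ) :
    sigmaC α (p ^ j) = ∑ i ∈ Finset.range (j + 1), ((p ^ i : ℕ) : ℂ) ^ α := by
  unfold sigmaC
  rw [Nat.sum_divisors_prime_pow hp]

lemma cpow_pow_succ {α : ℂ} {p : ℕ} (i : ℕ) :
    ((p ^ (i + 1) : ℕ) : ℂ) ^ α = ((p ^ i : ℕ) : ℂ) ^ α * ((p : ℕ) : ℂ) ^ α := by
  rw [pow_succ, natCast_cpow_mul]

lemma bracket_zero {α : ℂ} {p : ℕ} (hp : p.Prime) {a : ℕ} (ha : 1 ≤ a) :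
    ∑ i ∈ Finset.range (min a 2 + 1), sigmaC α (p ^ (a - i)) * muMuN α (p ^ i) = 0 := by
  set c : ℕ → ℂ := fun i => ((p ^ i : ℕ) : ℂ) ^ α with hc
  have hc0 : c 0 = 1 := by simp only [hc, pow_zero]; exact one_cpow_nat α
  have hS : ∀ j, sigmaC α (p ^ j) = ∑ i ∈ Finset.range (j + 1), c i :=
    fun j => sigmaC_prime_pow hp j
  rcases eq_or_lt_of_le ha with h1 | h2
  · -- a = 1
    have ha1 : a = 1 := h1.symm
    subst ha1
    rw [show min 1 2 = 1 from rfl]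
    rw [Finset.sum_range_succ, Finset.sum_range_succ, Finset.sum_range_zero]
    simp only [Nat.sub_self, Nat.sub_zero, pow_zero, pow_one]
    rw [muMuN_one, muMuN_prime hp, sigmaC_prime hp, sigmaC_one]
    ring
  · -- a ≥ 2
    obtain ⟨a', rfl⟩ : ∃ a', a = a' + 2 := ⟨a - 2, by omega⟩
    have hmin : min (a' + 2) 2 = 2 := by omega
    rw [hmin]
    rw [Finset.sum_range_succ, Finset.sum_range_succ, Finset.sum_range_succ,
      Finset.sum_range_zero]
    have e0 : a' + 2 - 0 = a' + 2 := rfl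
    have e1 : a' + 2 - 1 = a' + 1 := rfl
    have e2 : a' + 2 - 2 = a' := by omega
    rw [e0, e1, e2]
    simp only [pow_zero, pow_one]
    rw [muMuN_one, muMuN_prime hp, muMuN_prime_sq hp]
    rw [hS (a' + 2), hS (a' + 1), hS a']
    rw [Finset.sum_range_succ (n := a' + 2), Finset.sum_range_succ (n := a' + 1)]
    have k1 : c (a' + 2) = c (a' + 1) * ((p : ℕ) : ℂ) ^ α := cpow_pow_succ (a' + 1)
    have k2 : c (a' + 1) = c a' * ((p : ℕ) : ℂ) ^ α := cpow_pow_succ a'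
    rw [k1, k2]
    push_cast
    ring

theorem stmt3 (α : ℂ) (P : Finset ℕ) (hP : ∀ p ∈ P, Nat.Prime p) (hne : P.Nonempty)
    (n : ℕ) (hn : 0 < n) (hgcd : Nat.gcd n ((∏ p ∈ P, p) ^ 2) ≠ 1) :
    ∑ k ∈ (Nat.gcd n ((∏ p ∈ P, p) ^ 2)).divisors, sigmaC α (n / k) * muMuN α k = 0 := by
  set Q := ∏ p ∈ P, p with hQdef
  set g := Nat.gcd n (Q ^ 2) with hgdef
  have hQ0 : Q ≠ 0 := by
    rw [hQdef]
    exact Finset.prod_ne_zero_iff.mpr fun q hq => (hP q hq).pos.ne'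
  have hg0 : g ≠ 0 := Nat.gcd_ne_zero_left hn.ne'
  have hgn : g ∣ n := Nat.gcd_dvd_left _ _
  have hgQ : g ∣ Q ^ 2 := Nat.gcd_dvd_right _ _
  set p := g.minFac with hpdef
  have hp : p.Prime := Nat.minFac_prime hgcd
  have hpg : p ∣ g := Nat.minFac_dvd g
  have hpn : p ∣ n := hpg.trans hgn
  have hpQ : p ∣ Q := hp.dvd_of_dvd_pow (hpg.trans hgQ)
  have hpP : p ∈ P := by
    obtain ⟨q, hq, hpq⟩ := hp.prime.exists_mem_finset_dvd hpQ
    exact ((Nat.prime_dvd_prime_iff_eq hp (hP q hq)).mp hpq) ▸ hq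
  -- factorization facts
  have hvQ : Q.factorization p = 1 := by
    rw [hQdef, Nat.factorization_prod (fun q hq => (hP q hq).pos.ne')]
    rw [Finsupp.finset_sum_apply]
    have : ∀ q ∈ P, (q.factorization) p = if q = p then 1 else 0 := by
      intro q hq
      rw [(hP q hq).factorization]
      simp [Finsupp.single_apply]
    rw [Finset.sum_congr rfl this, Finset.sum_ite_eq' P p (fun _ => 1), if_pos hpP]
  set a := n.factorization p with hadef
  have ha1 : 1 ≤ a := Nat.Prime.factorization_pos_of_dvd hp hn.ne' hpn
  have hvg : g.factorization p = min a 2 := by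
    rw [hgdef, Nat.factorization_gcd hn.ne' (pow_ne_zero 2 hQ0)]
    rw [Finsupp.inf_apply]
    congr 1
    rw [Nat.factorization_pow, Finsupp.smul_apply, hvQ]
    simp
  set e := g.factorization p with hedef
  set t := g / p ^ e with htdef
  have hgt : p ^ e * t = g := Nat.ordProj_mul_ordCompl_eq_self g p
  have hpt : ¬ p ∣ t := Nat.not_dvd_ordCompl hp hg0
  have ht0 : t ≠ 0 := by
    intro h; rw [h, mul_zero] at hgt; exact hg0 hgt.symm
  have hcop : (p ^ e).Coprime t := Nat.Coprime.pow_left e ((hp.coprime_iff_not_dvd).mpr hpt)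
  -- m = p-free part of n
  set m := n / p ^ a with hmdef
  have hnm : p ^ a * m = n := Nat.ordProj_mul_ordCompl_eq_self n p
  have hpm : ¬ p ∣ m := Nat.not_dvd_ordCompl hp hn.ne'
  have hm0 : m ≠ 0 := by
    intro h; rw [h, mul_zero] at hnm; exact (hn.ne' hnm.symm)
  calc ∑ k ∈ g.divisors, sigmaC α (n / k) * muMuN α k
      = ∑ k ∈ (p ^ e * t).divisors, sigmaC α (n / k) * muMuN α k := by rw [hgt]
    _ = ∑ b ∈ (p ^ e).divisors, ∑ c ∈ t.divisors,
          sigmaC α (n / (b * c)) * muMuN α (b * c) := by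
        rw [sum_divisors_coprime_mul hcop]
    _ = ∑ i ∈ Finset.range (e + 1), ∑ c ∈ t.divisors,
          sigmaC α (n / (p ^ i * c)) * muMuN α (p ^ i * c) := by
        rw [Nat.sum_divisors_prime_pow hp]
    _ = ∑ c ∈ t.divisors, ∑ i ∈ Finset.range (e + 1),
          sigmaC α (n / (p ^ i * c)) * muMuN α (p ^ i * c) := Finset.sum_comm
    _ = 0 := by
        apply Finset.sum_eq_zero
        intro c hc
        rcases Nat.mem_divisors.mp hc with ⟨hct, -⟩
        have hc0 : c ≠ 0 := fun h => by subst h; exact ht0 (Nat.eq_zero_of_zero_dvd hct)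
        have hpc : ¬ p ∣ c := fun h => hpt (h.trans hct)
        have hcn : c ∣ n := (hct.trans (Dvd.intro_left _ hgt)).trans hgn
        have hcm : c ∣ m := by
          have hcop' : c.Coprime (p ^ a) :=
            Nat.Coprime.pow_right a ((Nat.coprime_comm.mp ((hp.coprime_iff_not_dvd).mpr hpc)))
          exact hcop'.dvd_of_dvd_mul_left (hnm ▸ hcn)
        have hmc0 : m / c ≠ 0 :=
          (Nat.div_pos (Nat.le_of_dvd (Nat.pos_of_ne_zero hm0) hcm)
            (Nat.pos_of_ne_zero hc0)).ne'
        have hpmc : ¬ p ∣ m / c := fun h => hpm (h.trans (Nat.div_dvd_of_dvd hcm))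
        have key : ∀ i ∈ Finset.range (e + 1),
            sigmaC α (n / (p ^ i * c)) * muMuN α (p ^ i * c)
              = (sigmaC α (m / c) * muMuN α c) *
                (sigmaC α (p ^ (a - i)) * muMuN α (p ^ i)) := by
          intro i hi
          have hie : i ≤ e := Nat.lt_succ_iff.mp (Finset.mem_range.mp hi)
          have hia : i ≤ a := le_trans hie (by rw [hvg]; exact min_le_left _ _)
          have hdiv : n / (p ^ i * c) = p ^ (a - i) * (m / c) := by
            have h1 : n = p ^ i * (p ^ (a - i) * m) := by
              rw [← mul_assoc, ← pow_add, Nat.add_sub_cancel' hia, hnm]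
            rw [h1, Nat.mul_div_mul_left _ _ (pow_pos hp.pos i),
              Nat.mul_div_assoc _ hcm]
          have hcop1 : (p ^ (a - i)).Coprime (m / c) :=
            Nat.Coprime.pow_left _ ((hp.coprime_iff_not_dvd).mpr hpmc)
          have hcop2 : (p ^ i).Coprime c :=
            Nat.Coprime.pow_left _ ((hp.coprime_iff_not_dvd).mpr hpc)
          rw [hdiv, sigmaC_mult (pow_ne_zero _ hp.pos.ne') hmc0 hcop1,
            muMuN_mult (pow_ne_zero _ hp.pos.ne') hc0 hcop2]
          ring
        rw [Finset.sum_congr rfl key, ← Finset.mul_sum]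
        have : e = min a 2 := hvg
        rw [this, bracket_zero hp ha1, mul_zero]
end

section
/- For complex z with Re(z) > max{0, -Re(s) + Re(α)}, the Mellin-type identity ∫_0^∞ x^{z-1} Γ((s-α)/2, x²) dx = (1/z) Γ((z+s-α)/2) holds, where Γ(a, x) = ∫_x^∞ t^{a-1} e^{-t} dt is the upper incomplete gamma function. -/
open MeasureTheory

/-- Upper incomplete gamma function `Γ(a, x) = ∫_x^∞ t^{a-1} e^{-t} dt` for real `x`. -/
noncomputable def upperGamma (a : ℂ) (x : ℝ) : ℂ :=
  ∫ t in Set.Ioi x, (t : ℂ) ^ (a - 1) * Complex.exp (-(t : ℂ))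

open Set Complex

lemma aux_sqrt_cpow {t : ℝ} (ht : 0 < t) (w : ℂ) :
    ((Real.sqrt t : ℝ) : ℂ) ^ w = (t : ℂ) ^ (w / 2) := by
  have h1 : ((Real.sqrt t : ℝ) : ℂ) = (t : ℂ) ^ ((2 : ℂ)⁻¹) := by
    rw [show Real.sqrt t = t ^ (2⁻¹ : ℝ) by
      rw [Real.sqrt_eq_rpow]; norm_num, Complex.ofReal_cpow ht.le]
    norm_num
  have him : (Complex.log (t : ℂ) * (2 : ℂ)⁻¹).im = 0 := by
    simp [Complex.mul_im, Complex.log_im, Complex.arg_ofReal_of_nonneg ht.le]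
  rw [h1, ← Complex.cpow_mul _ (by rw [him]; exact neg_neg_iff_pos.mpr Real.pi_pos)
    (by rw [him]; exact Real.pi_pos.le)]
  congr 1
  ring

theorem stmt11 (s α z : ℂ) (hz : 0 < z.re) (hzsα : 0 < (z + s - α).re) :
    ∫ x in Set.Ioi (0 : ℝ), (x : ℂ) ^ (z - 1) * upperGamma ((s - α) / 2) (x ^ 2) =
      (1 / z) * Complex.Gamma ((z + s - α) / 2) := by
  set a : ℂ := (s - α) / 2 with ha
  have hkey : a + z / 2 = (z + s - α) / 2 := by rw [ha]; ring
  have hq : 0 < (a + z / 2).re := by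
    rw [hkey, Complex.div_ofNat_re]; positivity
  have hq' : 0 < a.re + z.re / 2 := by
    have h := hzsα
    rw [ha, Complex.div_ofNat_re]
    simp only [Complex.sub_re, Complex.add_re] at h ⊢
    linarith
  have hz0 : z ≠ 0 := fun h => by simp [h] at hz
  have hz1 : (-1 : ℝ) < (z - 1).re := by
    simp only [Complex.sub_re, Complex.one_re]; linarith
  set g : ℝ → ℝ → ℂ := fun x t =>
    (x : ℂ) ^ (z - 1) * ((t : ℂ) ^ (a - 1) * Complex.exp (-(t : ℂ))) with hg
  set F : ℝ × ℝ → ℂ := fun p => if p.1 ^ 2 < p.2 then g p.1 p.2 else 0 with hF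
  have hFmeas : Measurable F := by
    apply Measurable.ite (measurableSet_lt (by fun_prop) measurable_snd)
    · exact ((Complex.measurable_ofReal.comp measurable_fst).pow measurable_const).mul
        (((Complex.measurable_ofReal.comp measurable_snd).pow measurable_const).mul
          (Complex.measurable_exp.comp (Complex.measurable_ofReal.comp measurable_snd).neg))
    · exact measurable_const
  -- identification of slices of F with indicator functions
  have hFt : ∀ t : ℝ, 0 < t → ∀ x ∈ Ioi (0 : ℝ),
      F (x, t) = (Ioo (0 : ℝ) (Real.sqrt t)).indicator (fun x : ℝ => g x t) x := by
    intro t ht x hx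
    rw [Set.mem_Ioi] at hx
    simp only [hF, Set.indicator_apply, Set.mem_Ioo]
    have hiff : x ^ 2 < t ↔ x < Real.sqrt t := (Real.lt_sqrt hx.le).symm
    by_cases h : x ^ 2 < t
    · rw [if_pos h, if_pos ⟨hx, hiff.mp h⟩]
    · rw [if_neg h, if_neg fun hc => h (hiff.mpr hc.2)]
  -- integrability of x ↦ x^(z-1) on Ioo 0 b
  have hxint : ∀ b : ℝ, 0 ≤ b →
      IntegrableOn (fun x : ℝ => (x : ℂ) ^ (z - 1)) (Ioo 0 b) volume := by
    intro b hb
    have := intervalIntegral.intervalIntegrable_cpow' (a := 0) (b := b) hz1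
    rwa [intervalIntegrable_iff_integrableOn_Ioo_of_le hb] at this
  -- integrability of each slice
  have hIx : ∀ t : ℝ, 0 < t → Integrable (fun x => F (x, t)) (volume.restrict (Ioi 0)) := by
    intro t ht
    apply Integrable.congr
      (f := (Ioo (0 : ℝ) (Real.sqrt t)).indicator (fun x : ℝ => g x t))
    · rw [integrable_indicator_iff measurableSet_Ioo, IntegrableOn,
        Measure.restrict_restrict measurableSet_Ioo]
      exact MeasureTheory.IntegrableOn.mono_set ((hxint _ (Real.sqrt_nonneg t)).mul_const _) Set.inter_subset_left
    · filter_upwards [ae_restrict_mem measurableSet_Ioi] with x hx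
      exact (hFt t ht x hx).symm
  -- value of the inner complex integral
  have hinner : ∀ t : ℝ, 0 < t →
      (∫ x in Ioi (0 : ℝ), F (x, t)) =
        ((t : ℂ) ^ (z / 2) / z) * ((t : ℂ) ^ (a - 1) * Complex.exp (-(t : ℂ))) := by
    intro t ht
    have h1 : (∫ x in Ioi (0 : ℝ), F (x, t)) =
        ∫ x in Ioi (0 : ℝ), (Ioo (0 : ℝ) (Real.sqrt t)).indicator (fun x : ℝ => g x t) x := by
      apply integral_congr_ae
      filter_upwards [ae_restrict_mem measurableSet_Ioi] with x hx
      exact hFt t ht x hx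
    rw [h1, setIntegral_indicator measurableSet_Ioo,
      Set.inter_eq_self_of_subset_right Set.Ioo_subset_Ioi_self]
    have h2 : (∫ x in Ioo (0 : ℝ) (Real.sqrt t), g x t) =
        (∫ x in Ioo (0 : ℝ) (Real.sqrt t), (x : ℂ) ^ (z - 1)) *
          ((t : ℂ) ^ (a - 1) * Complex.exp (-(t : ℂ))) := by
      rw [← integral_mul_const]
    have h3 : (∫ x in Ioo (0 : ℝ) (Real.sqrt t), (x : ℂ) ^ (z - 1)) = (t : ℂ) ^ (z / 2) / z := by
      rw [← integral_Ioc_eq_integral_Ioo,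
        ← intervalIntegral.integral_of_le (Real.sqrt_nonneg t),
        integral_cpow (Or.inl hz1)]
      rw [sub_add_cancel, Complex.ofReal_zero, Complex.zero_cpow hz0, sub_zero, aux_sqrt_cpow ht z]
    rw [h2, h3]
  -- value of the inner norm integral
  have hnorm : ∀ t : ℝ, 0 < t → (∫ x in Ioi (0 : ℝ), ‖F (x, t)‖) =
      (t ^ (2⁻¹ * z.re) / z.re) * (t ^ (a.re - 1) * Real.exp (-t)) := by
    intro t ht
    have h1 : (∫ x in Ioi (0 : ℝ), ‖F (x, t)‖) =
        ∫ x in Ioi (0 : ℝ),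
          (Ioo (0 : ℝ) (Real.sqrt t)).indicator (fun x : ℝ => ‖g x t‖) x := by
      apply integral_congr_ae
      filter_upwards [ae_restrict_mem measurableSet_Ioi] with x hx
      rw [hFt t ht x hx, norm_indicator_eq_indicator_norm]
    rw [h1, setIntegral_indicator measurableSet_Ioo,
      Set.inter_eq_self_of_subset_right Set.Ioo_subset_Ioi_self]
    have h2 : ∀ x ∈ Ioo (0 : ℝ) (Real.sqrt t),
        ‖g x t‖ = x ^ (z.re - 1) * (t ^ (a.re - 1) * Real.exp (-t)) := by
      intro x hx
      simp only [hg, norm_mul]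
      rw [Complex.norm_cpow_eq_rpow_re_of_pos hx.1, Complex.norm_cpow_eq_rpow_re_of_pos ht,
        Complex.norm_exp]
      simp [Complex.sub_re]
    rw [setIntegral_congr_fun measurableSet_Ioo h2, integral_mul_const]
    have h3 : (∫ x in Ioo (0 : ℝ) (Real.sqrt t), x ^ (z.re - 1)) = t ^ (2⁻¹ * z.re) / z.re := by
      rw [← integral_Ioc_eq_integral_Ioo,
        ← intervalIntegral.integral_of_le (Real.sqrt_nonneg t),
        integral_rpow (Or.inl (by linarith))]
      rw [sub_add_cancel, Real.zero_rpow hz.ne', sub_zero,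
        show Real.sqrt t = t ^ (2⁻¹ : ℝ) by rw [Real.sqrt_eq_rpow]; norm_num,
        ← Real.rpow_mul ht.le]
    rw [h3]
  -- integrability of F on the product
  have hint : Integrable F ((volume.restrict (Ioi 0)).prod (volume.restrict (Ioi 0))) := by
    rw [integrable_prod_iff' hFmeas.aestronglyMeasurable]
    constructor
    · filter_upwards [ae_restrict_mem measurableSet_Ioi] with t ht
      exact hIx t ht
    · apply Integrable.congr
        (f := fun t : ℝ => (1 / z.re) * (Real.exp (-t) * t ^ (a.re + z.re / 2 - 1)))
      · exact (Real.GammaIntegral_convergent hq').const_mul _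
      · filter_upwards [ae_restrict_mem measurableSet_Ioi] with t ht
        rw [hnorm t ht]
        rw [show a.re + z.re / 2 - 1 = 2⁻¹ * z.re + (a.re - 1) by ring,
          Real.rpow_add ht]
        ring
  -- the left-hand side as an iterated integral
  have hL : (∫ x in Ioi (0 : ℝ), (x : ℂ) ^ (z - 1) * upperGamma a (x ^ 2)) =
      ∫ x in Ioi (0 : ℝ), ∫ t in Ioi (0 : ℝ), F (x, t) := by
    apply setIntegral_congr_fun measurableSet_Ioi
    intro x hx
    rw [Set.mem_Ioi] at hx
    have h1 : ∀ t : ℝ, F (x, t) = (Ioi (x ^ 2)).indicator (fun t : ℝ => g x t) t := by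
      intro t
      simp only [hF, Set.indicator_apply, Set.mem_Ioi]
    simp only [h1]
    rw [setIntegral_indicator measurableSet_Ioi,
      Set.Ioi_inter_Ioi, max_eq_right (sq_nonneg x)]
    rw [upperGamma, ← integral_const_mul]
  rw [hL, integral_integral_swap (f := fun x t => F (x, t)) hint]
  have hR : (∫ t in Ioi (0 : ℝ), ∫ x in Ioi (0 : ℝ), F (x, t)) =
      (1 / z) * ∫ t in Ioi (0 : ℝ), ((Real.exp (-t) : ℝ) : ℂ) * (t : ℂ) ^ (a + z / 2 - 1) := by
    rw [← integral_const_mul]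
    apply setIntegral_congr_fun measurableSet_Ioi
    intro t ht
    rw [Set.mem_Ioi] at ht
    dsimp only
    rw [hinner t ht]
    have ht0 : (t : ℂ) ≠ 0 := Complex.ofReal_ne_zero.mpr ht.ne'
    rw [show a + z / 2 - 1 = z / 2 + (a - 1) by ring, Complex.cpow_add _ _ ht0]
    rw [Complex.ofReal_exp, Complex.ofReal_neg]
    ring
  rw [hR, ← hkey, Complex.Gamma_eq_integral hq, Complex.GammaIntegral]
end

section
/- For Re(β) > 0 and Re(γ) > 0 and any complex ν, ∫_0^∞ x^{ν-1} e^{-γx - β/x} dx = 2 (β/γ)^{ν/2} K_ν(2√(γβ)), where K_ν is the modified Bessel function of the second kind. -/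
set_option maxHeartbeats 1000000
open MeasureTheory Set

lemma pow_div_fac_le_exp (n : ℕ) {t : ℝ} (ht : 0 ≤ t) :
    t ^ n / n.factorial ≤ Real.exp t := by
  calc t ^ n / (n.factorial : ℝ)
      ≤ ∑ i ∈ Finset.range (n+1), t ^ i / i.factorial :=
        Finset.single_le_sum (f := fun i => t ^ i / (i.factorial : ℝ))
          (fun i _ => by positivity) (Finset.self_mem_range_succ n)
    _ ≤ Real.exp t := Real.sum_le_exp_of_nonneg ht _

lemma exp_neg_le_aux (n : ℕ) {t : ℝ} (ht : 0 < t) :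
    Real.exp (-t) ≤ n.factorial / t ^ n := by
  rw [Real.exp_neg, inv_le_iff_one_le_mul₀ (Real.exp_pos _), div_mul_eq_mul_div,
    le_div_iff₀ (by positivity), one_mul]
  have := pow_div_fac_le_exp n ht.le
  rw [div_le_iff₀ (by positivity : (0:ℝ) < (n.factorial:ℝ))] at this
  linarith [this]

lemma contOn_aux (p ε : ℝ) : ContinuousOn
    (fun x : ℝ => x ^ p * Real.exp (-(ε * x) - ε / x)) (Ioi 0) := by
  intro x hx
  have hx0 : x ≠ 0 := ne_of_gt hx
  have h1 : ContinuousAt (fun x : ℝ => x ^ p) x :=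
    Real.continuousAt_rpow_const x p (Or.inl hx0)
  have h2 : ContinuousAt (fun x : ℝ => Real.exp (-(ε * x) - ε / x)) x :=
    Real.continuous_exp.continuousAt.comp
      (((continuous_const.mul continuous_id).continuousAt.neg).sub
        (continuousAt_const.div continuousAt_id hx0))
  exact (h1.mul h2).continuousWithinAt

lemma keyInt (p : ℝ) {ε : ℝ} (hε : 0 < ε) :
    IntegrableOn (fun x : ℝ => x ^ p * Real.exp (-(ε * x) - ε / x)) (Ioi 0) := by
  have hmeas : ∀ s ⊆ Ioi (0:ℝ), MeasurableSet s → AEStronglyMeasurable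
      (fun x : ℝ => x ^ p * Real.exp (-(ε * x) - ε / x)) (volume.restrict s) :=
    fun s hs hms => ((contOn_aux p ε).mono hs).aestronglyMeasurable hms
  have h1 : IntegrableOn (fun x : ℝ => x ^ p * Real.exp (-(ε * x) - ε / x)) (Ioc 0 1) := by
    obtain ⟨n, hn⟩ : ∃ n : ℕ, 0 ≤ p + n := ⟨⌈-p⌉₊, by
      have := Nat.le_ceil (-p); push_cast at this ⊢; linarith⟩
    refine Integrable.mono' (g := fun _ : ℝ => (n.factorial / ε ^ n : ℝ))
      (integrableOn_const (by simp))
      (hmeas _ Ioc_subset_Ioi_self measurableSet_Ioc) ?_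
    filter_upwards [ae_restrict_mem measurableSet_Ioc] with x hx
    obtain ⟨hx0, hx1⟩ := hx
    rw [Real.norm_eq_abs, abs_of_nonneg (by positivity)]
    have hdx : (0:ℝ) < ε / x := div_pos hε hx0
    have h2 : Real.exp (-(ε*x) - ε/x) ≤ Real.exp (-(ε/x)) :=
      Real.exp_le_exp.2 (by nlinarith)
    have h3 : Real.exp (-(ε/x)) ≤ n.factorial / (ε/x) ^ n := exp_neg_le_aux n hdx
    have h4 : (n.factorial : ℝ) / (ε/x) ^ n = (n.factorial / ε ^ n) * x ^ (n:ℝ) := by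
      rw [div_pow, Real.rpow_natCast]
      field_simp
    calc x ^ p * Real.exp (-(ε*x) - ε/x)
        ≤ x ^ p * ((n.factorial / ε ^ n) * x ^ (n:ℝ)) := by
          refine mul_le_mul_of_nonneg_left ?_ (by positivity)
          rw [← h4]; exact h2.trans h3
      _ = (n.factorial / ε ^ n) * x ^ (p + (n:ℝ)) := by
          rw [Real.rpow_add hx0]; ring
      _ ≤ (n.factorial / ε ^ n) * 1 := by
          refine mul_le_mul_of_nonneg_left ?_ (by positivity)
          exact Real.rpow_le_one (le_of_lt hx0) hx1 hn
      _ = n.factorial / ε ^ n := mul_one _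
  have h2 : IntegrableOn (fun x : ℝ => x ^ p * Real.exp (-(ε * x) - ε / x)) (Ioi 1) := by
    refine Integrable.mono'
      (g := fun x => x ^ max p 0 * Real.exp (-ε * x ^ (1:ℝ)))
      ?_ (hmeas _ (Ioi_subset_Ioi zero_le_one) measurableSet_Ioi) ?_
    · have h6 : IntegrableOn (fun x : ℝ => x ^ max p 0 * Real.exp (-ε * x ^ (1:ℝ))) (Ioi 0) :=
        integrableOn_rpow_mul_exp_neg_mul_rpow
          (lt_of_lt_of_le neg_one_lt_zero (le_max_right p 0)) zero_lt_one hε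
      exact h6.mono_set (Ioi_subset_Ioi zero_le_one)
    · filter_upwards [ae_restrict_mem measurableSet_Ioi] with x hx
      have hx1 : (1:ℝ) ≤ x := le_of_lt hx
      have hx0 : (0:ℝ) < x := lt_of_lt_of_le one_pos hx1
      rw [Real.norm_eq_abs, abs_of_nonneg (by positivity), Real.rpow_one, neg_mul]
      have h5 : Real.exp (-(ε*x) - ε/x) ≤ Real.exp (-(ε*x)) :=
        Real.exp_le_exp.2 (by nlinarith [div_pos hε hx0])
      have hp : x ^ p ≤ x ^ max p 0 := Real.rpow_le_rpow_of_exponent_le hx1 (le_max_left _ _)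
      exact mul_le_mul hp h5 (Real.exp_pos _).le (by positivity)
  have := h1.union h2
  rwa [Ioc_union_Ioi_eq_Ioi zero_le_one] at this

lemma re_aux (a b : ℂ) (x : ℝ) :
    ((-a * (x:ℂ) - b / (x:ℂ)).re) = -(a.re * x) - b.re / x := by
  simp [Complex.sub_re, Complex.neg_re, Complex.mul_re, Complex.div_ofReal_re]

lemma normF {x : ℝ} (hx : 0 < x) (ν a b : ℂ) :
    ‖(x:ℂ) ^ (ν - 1) * Complex.exp (-a * x - b / x)‖
      = x ^ (ν.re - 1) * Real.exp (-(a.re * x) - b.re / x) := by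
  rw [norm_mul, Complex.norm_exp,
    Complex.norm_cpow_eq_rpow_re_of_pos hx, re_aux, Complex.sub_re, Complex.one_re]

lemma contOnF (ν a b : ℂ) : ContinuousOn
    (fun x : ℝ => (x:ℂ) ^ (ν - 1) * Complex.exp (-a * x - b / x)) (Ioi 0) := by
  intro x hx
  have hx0 : (x:ℂ) ≠ 0 := by exact_mod_cast ne_of_gt hx
  have h1 : ContinuousAt (fun x : ℝ => (x:ℂ) ^ (ν - 1)) x :=
    (continuousAt_cpow_const (by exact Or.inl (by simpa using hx))).comp
      Complex.continuous_ofReal.continuousAt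
  have h2 : ContinuousAt (fun x : ℝ => Complex.exp (-a * x - b / x)) x := by
    refine Complex.continuous_exp.continuousAt.comp ?_
    exact ((continuous_const.mul Complex.continuous_ofReal).continuousAt).sub
      (continuousAt_const.div Complex.continuous_ofReal.continuousAt hx0)
  exact (h1.mul h2).continuousWithinAt

lemma measF (ν a b : ℂ) : AEStronglyMeasurable
    (fun x : ℝ => (x:ℂ) ^ (ν - 1) * Complex.exp (-a * x - b / x))
    (volume.restrict (Ioi 0)) :=
  (contOnF ν a b).aestronglyMeasurable measurableSet_Ioi

lemma intF (ν : ℂ) {a b : ℂ} (ha : 0 < a.re) (hb : 0 < b.re) :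
    IntegrableOn (fun x : ℝ => (x:ℂ) ^ (ν - 1) * Complex.exp (-a * x - b / x)) (Ioi 0) := by
  set ε := min a.re b.re with hε
  have hε0 : 0 < ε := lt_min ha hb
  refine Integrable.mono' (keyInt (ν.re - 1) hε0) (measF ν a b) ?_
  filter_upwards [ae_restrict_mem measurableSet_Ioi] with x hx
  rw [normF hx]
  have hx0 : (0:ℝ) < x := hx
  refine mul_le_mul_of_nonneg_left (Real.exp_le_exp.2 ?_) (by positivity)
  have h1 : ε ≤ a.re := min_le_left _ _
  have h2 : ε ≤ b.re := min_le_right _ _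
  have h3 : ε / x ≤ b.re / x := by gcongr
  have h4 : ε * x ≤ a.re * x := by gcongr
  linarith

lemma diffOn_param (ν : ℂ) {U : Set ℂ} (hU : IsOpen U) {φ ψ : ℂ → ℂ}
    (hφ : DifferentiableOn ℂ φ U) (hψ : DifferentiableOn ℂ ψ U)
    (hφre : ∀ b ∈ U, 0 < (φ b).re) (hψre : ∀ b ∈ U, 0 < (ψ b).re) :
    DifferentiableOn ℂ
      (fun b => ∫ x in Ioi (0:ℝ), (x:ℂ) ^ (ν - 1) * Complex.exp (-φ b * x - ψ b / x)) U := by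
  intro b₀ hb₀
  refine DifferentiableAt.differentiableWithinAt ?_
  obtain ⟨δ, hδ0, hδ⟩ := Metric.isOpen_iff.1 hU b₀ hb₀
  set r := δ / 2 with hr
  have hr0 : 0 < r := by positivity
  have hKU : Metric.closedBall b₀ r ⊆ U :=
    (Metric.closedBall_subset_ball (by simpa [hr] using half_lt_self hδ0)).trans hδ
  have hK : IsCompact (Metric.closedBall b₀ r) := isCompact_closedBall _ _
  have hKne : (Metric.closedBall b₀ r).Nonempty := ⟨b₀, Metric.mem_closedBall_self hr0.le⟩
  -- derivatives of φ, ψ are continuous on U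
  have hφa : AnalyticOnNhd ℂ φ U := hφ.analyticOnNhd hU
  have hψa : AnalyticOnNhd ℂ ψ U := hψ.analyticOnNhd hU
  have hφd : ContinuousOn (deriv φ) U := hφa.deriv.continuousOn
  have hψd : ContinuousOn (deriv ψ) U := hψa.deriv.continuousOn
  -- uniform lower bound ε for re parts on the closed ball
  obtain ⟨b₁, hb₁, hmin1⟩ := hK.exists_isMinOn hKne ((Complex.continuous_re.comp_continuousOn (hφ.continuousOn.mono hKU)))
  obtain ⟨b₂, hb₂, hmin2⟩ := hK.exists_isMinOn hKne ((Complex.continuous_re.comp_continuousOn (hψ.continuousOn.mono hKU)))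
  set ε : ℝ := min ((φ b₁).re) ((ψ b₂).re) with hεdef
  have hε0 : 0 < ε := lt_min (hφre b₁ (hKU hb₁)) (hψre b₂ (hKU hb₂))
  have hεφ : ∀ b ∈ Metric.closedBall b₀ r, ε ≤ (φ b).re :=
    fun b hb => le_trans (min_le_left _ _) (hmin1 hb)
  have hεψ : ∀ b ∈ Metric.closedBall b₀ r, ε ≤ (ψ b).re :=
    fun b hb => le_trans (min_le_right _ _) (hmin2 hb)
  -- uniform bound M for the derivatives on the closed ball
  obtain ⟨M1, hM1⟩ := hK.exists_bound_of_continuousOn (hφd.mono hKU)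
  obtain ⟨M2, hM2⟩ := hK.exists_bound_of_continuousOn (hψd.mono hKU)
  set M : ℝ := max (max M1 M2) 1 with hMdef
  have hM0 : 0 < M := lt_of_lt_of_le one_pos (le_max_right _ _)
  have hMφ : ∀ b ∈ Metric.closedBall b₀ r, ‖deriv φ b‖ ≤ M :=
    fun b hb => (hM1 b hb).trans ((le_max_left _ _).trans (le_max_left _ _))
  have hMψ : ∀ b ∈ Metric.closedBall b₀ r, ‖deriv ψ b‖ ≤ M :=
    fun b hb => (hM2 b hb).trans ((le_max_right M1 M2).trans (le_max_left _ _))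
  -- the dominated-derivative theorem
  set F : ℂ → ℝ → ℂ := fun b x => (x:ℂ) ^ (ν - 1) * Complex.exp (-φ b * x - ψ b / x) with hF
  set F' : ℂ → ℝ → ℂ := fun b x =>
    (x:ℂ) ^ (ν - 1) * Complex.exp (-φ b * x - ψ b / x) * (-(deriv φ b) * x - (deriv ψ b) / x)
    with hF'
  set bound : ℝ → ℝ := fun x =>
    M * (x ^ ν.re * Real.exp (-(ε * x) - ε / x)) + M * (x ^ (ν.re - 2) * Real.exp (-(ε * x) - ε / x))
    with hbound
  have hdiff := hasDerivAt_integral_of_dominated_loc_of_deriv_le (F := F) (F' := F')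
    (μ := volume.restrict (Ioi 0)) (bound := bound) (x₀ := b₀) (Metric.ball_mem_nhds b₀ hr0)
    ?_ ?_ ?_ ?_ ?_ ?_
  · exact hdiff.2.differentiableAt
  · exact Filter.Eventually.of_forall fun b => measF ν (φ b) (ψ b)
  · exact intF ν (hφre b₀ hb₀) (hψre b₀ hb₀)
  · -- measurability of F' b₀
    refine (((contOnF ν (φ b₀) (ψ b₀)).mul ?_).aestronglyMeasurable measurableSet_Ioi)
    intro x hx
    have hx0 : (x:ℂ) ≠ 0 := by exact_mod_cast ne_of_gt hx
    exact (((continuous_const.mul Complex.continuous_ofReal).continuousAt).sub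
      (continuousAt_const.div Complex.continuous_ofReal.continuousAt hx0)).continuousWithinAt
  · -- bound
    filter_upwards [ae_restrict_mem measurableSet_Ioi] with x hx b hb
    have hb' : b ∈ Metric.closedBall b₀ r := Metric.ball_subset_closedBall hb
    have hx0 : (0:ℝ) < x := hx
    rw [hF', norm_mul, normF hx0]
    have e1 : Real.exp (-((φ b).re * x) - (ψ b).re / x) ≤ Real.exp (-(ε * x) - ε / x) := by
      refine Real.exp_le_exp.2 ?_
      have h3 : ε / x ≤ (ψ b).re / x := by have := hεψ b hb'; gcongr
      have h4 : ε * x ≤ (φ b).re * x := by have := hεφ b hb'; gcongr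
      linarith
    have e2 : ‖-(deriv φ b) * (x:ℂ) - (deriv ψ b) / (x:ℂ)‖ ≤ M * x + M / x := by
      refine (norm_sub_le _ _).trans ?_
      have n1 : ‖-(deriv φ b) * (x:ℂ)‖ ≤ M * x := by
        rw [norm_mul, norm_neg, Complex.norm_real, Real.norm_eq_abs, abs_of_pos hx0]
        exact mul_le_mul_of_nonneg_right (hMφ b hb') hx0.le
      have n2 : ‖(deriv ψ b) / (x:ℂ)‖ ≤ M / x := by
        rw [norm_div, Complex.norm_real, Real.norm_eq_abs, abs_of_pos hx0]
        have := hMψ b hb'; gcongr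
      linarith
    calc x ^ (ν.re - 1) * Real.exp (-((φ b).re * x) - (ψ b).re / x)
          * ‖-(deriv φ b) * (x:ℂ) - (deriv ψ b) / (x:ℂ)‖
        ≤ x ^ (ν.re - 1) * Real.exp (-(ε * x) - ε / x) * (M * x + M / x) := by
          refine mul_le_mul (mul_le_mul_of_nonneg_left e1 (by positivity)) e2 (norm_nonneg _)
            (by positivity)
      _ = bound x := by
          have r1 : x ^ (ν.re - 1) * x = x ^ ν.re := by
            rw [← Real.rpow_add_one hx0.ne' (ν.re - 1)]; norm_num
          have r2 : x ^ (ν.re - 1) / x = x ^ (ν.re - 2) := by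
            rw [← Real.rpow_sub_one hx0.ne' (ν.re - 1)]; congr 1; ring
          simp only [hbound, ← r1, ← r2]; ring
  · -- integrability of bound
    exact ((keyInt ν.re hε0).const_mul M).add ((keyInt (ν.re - 2) hε0).const_mul M)
  · -- differentiability in b
    filter_upwards [ae_restrict_mem measurableSet_Ioi] with x hx b hb
    have hbU : b ∈ U := hδ (Metric.mem_ball.2 (lt_trans (Metric.mem_ball.1 hb) (by simpa [hr] using half_lt_self hδ0)))
    have hφb : HasDerivAt φ (deriv φ b) b := (hφ.differentiableAt (hU.mem_nhds hbU)).hasDerivAt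
    have hψb : HasDerivAt ψ (deriv ψ b) b := (hψ.differentiableAt (hU.mem_nhds hbU)).hasDerivAt
    have h1 : HasDerivAt (fun b => -φ b * (x:ℂ) - ψ b / (x:ℂ))
        (-(deriv φ b) * x - (deriv ψ b) / x) b :=
      (hφb.neg.mul_const _).sub (hψb.div_const _)
    have h3 := (h1.cexp).const_mul ((x:ℂ) ^ (ν - 1))
    refine h3.congr_deriv ?_
    rw [hF']; ring

lemma mul_mem_slit {a b : ℂ} (ha : 0 < a.re) (hb : 0 < b.re) :
    a * b ∈ Complex.slitPlane := by
  rw [Complex.mem_slitPlane_iff]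
  rcases eq_or_ne (a * b).im 0 with h | h
  · left
    rw [Complex.mul_im] at h
    rw [Complex.mul_re]
    have h5 : (a.re * b.im + a.im * b.re) * b.im = 0 := by rw [h]; ring
    nlinarith [mul_pos ha (mul_pos hb hb), mul_nonneg ha.le (mul_self_nonneg b.im), hb, ha]
  · exact Or.inr h

lemma sqrt_re_pos {z : ℂ} (hz : z ∈ Complex.slitPlane) :
    0 < (z ^ (1/2 : ℂ)).re := by
  have hz0 : z ≠ 0 := Complex.slitPlane_ne_zero hz
  rw [Complex.cpow_def_of_ne_zero hz0, Complex.exp_re]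
  have him : (Complex.log z * (1/2)).im = z.arg / 2 := by
    simp [Complex.mul_im, Complex.log_im]; ring
  rw [him]
  have h1 : -Real.pi < z.arg := Complex.neg_pi_lt_arg z
  have h2 : z.arg < Real.pi := lt_of_le_of_ne (Complex.arg_le_pi z) (Complex.slitPlane_arg_ne_pi hz)
  have hcos : 0 < Real.cos (z.arg / 2) :=
    Real.cos_pos_of_mem_Ioo ⟨by linarith, by linarith⟩
  positivity

lemma sqrt_mul_ofReal {s : ℝ} (hs : 0 < s) {w : ℂ} (hw : w ≠ 0) :
    ((s : ℂ) * w) ^ (1/2 : ℂ) = (s : ℂ) ^ (1/2 : ℂ) * w ^ (1/2 : ℂ) := by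
  have hs0 : (s : ℂ) ≠ 0 := by exact_mod_cast ne_of_gt hs
  rw [Complex.cpow_def_of_ne_zero (mul_ne_zero hs0 hw),
    Complex.cpow_def_of_ne_zero hs0, Complex.cpow_def_of_ne_zero hw,
    Complex.log_ofReal_mul hs hw, ← Complex.exp_add, Complex.ofReal_log hs.le]
  congr 1; ring

lemma sqrt_sq {γ : ℂ} (hγ : 0 < γ.re) : (γ ^ (2:ℕ)) ^ (1/2 : ℂ) = γ := by
  rw [show (1/2 : ℂ) = (2⁻¹ : ℂ) by norm_num]
  exact Complex.sq_cpow_two_inv hγ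

noncomputable def Gfun (ν w : ℂ) : ℂ :=
  ∫ t in Ioi (0:ℝ), (t:ℂ) ^ (ν - 1) * Complex.exp (-w * t - w / t)

lemma Gfun_def (ν w : ℂ) : Gfun ν w
    = ∫ t in Ioi (0:ℝ), (t:ℂ) ^ (ν - 1) * Complex.exp (-w * t - w / t) := rfl

lemma ofReal_sqrt_cpow {s : ℝ} (hs : 0 < s) (ν : ℂ) :
    ((Real.sqrt s : ℝ) : ℂ) ^ ν = (s : ℂ) ^ (ν / 2) := by
  have h1 : ((Real.sqrt s : ℝ) : ℂ) ≠ 0 := by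
    exact_mod_cast (Real.sqrt_pos.2 hs).ne'
  have h2 : (s : ℂ) ≠ 0 := by exact_mod_cast hs.ne'
  rw [Complex.cpow_def_of_ne_zero h1, Complex.cpow_def_of_ne_zero h2,
    ← Complex.ofReal_log (Real.sqrt_nonneg s), ← Complex.ofReal_log hs.le,
    Real.log_sqrt hs.le]
  congr 1
  push_cast
  ring

lemma ray_eq (ν γ : ℂ) (hγ : 0 < γ.re) {s : ℝ} (hs : 0 < s) :
    ∫ x in Ioi (0:ℝ), (x:ℂ) ^ (ν - 1) * Complex.exp (-γ * x - ((s:ℂ) * γ) / x)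
      = (s : ℂ) ^ (ν / 2) * Gfun ν ((Real.sqrt s : ℝ) * γ) := by
  set c : ℝ := Real.sqrt s with hcdef
  have hc : 0 < c := Real.sqrt_pos.2 hs
  have hc2 : c * c = s := Real.mul_self_sqrt hs.le
  set f : ℝ → ℂ := fun x => (x:ℂ) ^ (ν - 1) * Complex.exp (-γ * x - ((s:ℂ) * γ) / x) with hf
  have sub := integral_comp_mul_left_Ioi f 0 hc
  rw [mul_zero] at sub
  -- sub : ∫ x in Ioi 0, f (c * x) = c⁻¹ • ∫ x in Ioi 0, f x
  have key : ∀ x ∈ Ioi (0:ℝ), f (c * x)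
      = (c:ℂ) ^ (ν - 1) * ((x:ℂ) ^ (ν - 1) * Complex.exp (-((c:ℝ)*γ) * x - ((c:ℝ)*γ) / x)) := by
    intro x hx
    have hx0 : (0:ℝ) < x := hx
    rw [hf]
    simp only [Complex.ofReal_mul]
    rw [Complex.mul_cpow_ofReal_nonneg hc.le hx0.le]
    have harg : -γ * ((c:ℂ) * x) - ((s:ℂ) * γ) / ((c:ℂ) * x)
        = -((c:ℝ)*γ : ℂ) * x - ((c:ℝ)*γ : ℂ) / x := by
      have hcx : (c : ℂ) ≠ 0 := by exact_mod_cast hc.ne'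
      have hxx : (x : ℂ) ≠ 0 := by exact_mod_cast hx0.ne'
      have hsc : (s : ℂ) = (c:ℂ) * c := by
        rw [← hc2]; push_cast; ring
      rw [hsc]
      push_cast
      field_simp
    rw [harg]
    ring
  rw [setIntegral_congr_fun measurableSet_Ioi key] at sub
  rw [integral_const_mul] at sub
  have hcC : (c : ℂ) ≠ 0 := by exact_mod_cast hc.ne'
  have final : (∫ x in Ioi (0:ℝ), f x)
      = (c:ℝ) • ((c:ℂ) ^ (ν - 1) * Gfun ν ((c:ℝ) * γ)) := by
    rw [Gfun_def, sub, smul_smul, mul_inv_cancel₀ hc.ne', one_smul]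
  rw [hf] at final
  rw [final, Complex.real_smul, ← mul_assoc]
  congr 1
  rw [← ofReal_sqrt_cpow hs ν, ← hcdef]
  rw [show (c:ℂ) * (c:ℂ)^(ν-1) = (c:ℂ)^(1:ℂ) * (c:ℂ)^(ν-1) by rw [Complex.cpow_one],
    ← Complex.cpow_add _ _ hcC]
  congr 1; ring

/-- Modified Bessel function of the second kind, via the integral representation
`K_ν(z) = (1/2) ∫_0^∞ t^{ν-1} exp(-(z/2)(t + 1/t)) dt` (valid for `Re z > 0`). -/
noncomputable def besselK (ν z : ℂ) : ℂ :=
  (1 / 2) * ∫ t in Set.Ioi (0 : ℝ),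
    (t : ℂ) ^ (ν - 1) * Complex.exp (-(z / 2) * ((t : ℂ) + 1 / (t : ℂ)))

lemma besselK_two_mul (ν w : ℂ) : besselK ν (2 * w) = (1/2) * Gfun ν w := by
  rw [besselK, Gfun_def]
  congr 1
  refine integral_congr_ae (Filter.Eventually.of_forall fun t => ?_)
  congr 1
  ring

theorem stmt13 (ν β γ : ℂ) (hβ : 0 < β.re) (hγ : 0 < γ.re) :
    ∫ x in Set.Ioi (0 : ℝ), (x : ℂ) ^ (ν - 1) * Complex.exp (-γ * (x : ℂ) - β / (x : ℂ)) =
      2 * (β / γ) ^ (ν / 2) * besselK ν (2 * (γ * β) ^ ((1 : ℂ) / 2)) := by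
  have hγ0 : γ ≠ 0 := fun h => by simp [h] at hγ
  set U : Set ℂ := {z | 0 < z.re} with hU
  have hUo : IsOpen U := isOpen_lt continuous_const Complex.continuous_re
  have hUp : IsPreconnected U := (convex_halfSpace_re_gt 0).isPreconnected
  have hslit : ∀ b ∈ U, γ * b ∈ Complex.slitPlane := fun b hb => mul_mem_slit hγ hb
  have hslit2 : ∀ b ∈ U, b / γ ∈ Complex.slitPlane := by
    intro b hb
    have hinv : 0 < (γ⁻¹).re := by
      rw [Complex.inv_re]
      exact div_pos hγ (Complex.normSq_pos.2 hγ0)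
    rw [div_eq_mul_inv]
    exact mul_mem_slit hb hinv
  have hf_diff : DifferentiableOn ℂ
      (fun b => ∫ x in Ioi (0:ℝ), (x:ℂ) ^ (ν - 1) * Complex.exp (-γ * x - b / x)) U := by
    have := diffOn_param (φ := fun _ => γ) (ψ := fun b => b) ν hUo
      (differentiableOn_const _) (differentiable_id.differentiableOn)
      (fun b _ => hγ) (fun b hb => hb)
    exact this
  have hsq_diff : DifferentiableOn ℂ (fun b => (γ * b) ^ ((1:ℂ)/2)) U := fun b hb =>
    (((differentiableAt_const γ).mul differentiableAt_id).cpow (differentiableAt_const _)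
      (hslit b hb)).differentiableWithinAt
  have hsq_re : ∀ b ∈ U, 0 < ((γ * b) ^ ((1:ℂ)/2)).re := fun b hb => sqrt_re_pos (hslit b hb)
  have hG_diff : DifferentiableOn ℂ (fun b => Gfun ν ((γ * b) ^ ((1:ℂ)/2))) U := by
    have := diffOn_param (φ := fun b => (γ * b) ^ ((1:ℂ)/2)) (ψ := fun b => (γ * b) ^ ((1:ℂ)/2))
      ν hUo hsq_diff hsq_diff hsq_re hsq_re
    exact this
  have hg_diff : DifferentiableOn ℂ
      (fun b => 2 * (b / γ) ^ (ν / 2) * besselK ν (2 * (γ * b) ^ ((1:ℂ)/2))) U := by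
    have h1 : DifferentiableOn ℂ (fun b => (b / γ) ^ (ν / 2)) U := fun b hb =>
      ((differentiableAt_id.div_const γ).cpow (differentiableAt_const _)
        (hslit2 b hb)).differentiableWithinAt
    have heq : (fun b => 2 * (b / γ) ^ (ν / 2) * besselK ν (2 * (γ * b) ^ ((1:ℂ)/2)))
        = fun b => 2 * (b / γ) ^ (ν / 2) * ((1/2) * Gfun ν ((γ * b) ^ ((1:ℂ)/2))) := by
      funext b; rw [besselK_two_mul]
    rw [heq]
    exact ((differentiableOn_const 2).mul h1).mul ((differentiableOn_const _).mul hG_diff)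
  have hfa := hf_diff.analyticOnNhd hUo
  have hga := hg_diff.analyticOnNhd hUo
  -- the sequence approaching γ along the ray
  set u : ℕ → ℂ := fun n => ((1 + ((n:ℝ)+1)⁻¹ : ℝ) : ℂ) * γ with hu
  have hsn : ∀ n : ℕ, (0:ℝ) < 1 + ((n:ℝ)+1)⁻¹ := fun n => by positivity
  have huγ : ∀ n, u n ≠ γ := by
    intro n h
    simp only [hu] at h
    have h2 : ((1 + ((n:ℝ)+1)⁻¹ : ℝ) : ℂ) = 1 :=
      mul_right_cancel₀ hγ0 (h.trans (one_mul γ).symm)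
    have h3 : (1 + ((n:ℝ)+1)⁻¹ : ℝ) = 1 := by exact_mod_cast h2
    have h4 : ((n:ℝ)+1)⁻¹ = 0 := by linarith
    exact absurd h4 (by positivity)
  have hlim : Filter.Tendsto u Filter.atTop (nhdsWithin γ {γ}ᶜ) := by
    rw [tendsto_nhdsWithin_iff]
    constructor
    · have h0 : Filter.Tendsto (fun n : ℕ => ((n:ℝ)+1)⁻¹) Filter.atTop (nhds 0) := by
        simpa [one_div] using tendsto_one_div_add_atTop_nhds_zero_nat (𝕜 := ℝ)
      have h1 : Filter.Tendsto (fun n : ℕ => (1 + ((n:ℝ)+1)⁻¹ : ℝ)) Filter.atTop (nhds 1) := by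
        simpa using tendsto_const_nhds.add h0
      have h2 := (Complex.continuous_ofReal.tendsto 1).comp h1
      have h3 := h2.mul_const γ
      simpa [hu] using h3
    · exact Filter.Eventually.of_forall fun n => huγ n
  have heqray : ∀ n, (fun b => ∫ x in Ioi (0:ℝ), (x:ℂ) ^ (ν - 1)
        * Complex.exp (-γ * x - b / x)) (u n)
      = (fun b => 2 * (b / γ) ^ (ν / 2) * besselK ν (2 * (γ * b) ^ ((1:ℂ)/2))) (u n) := by
    intro n
    set s : ℝ := 1 + ((n:ℝ)+1)⁻¹ with hsdef
    have hs : 0 < s := hsn n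
    simp only [hu]
    rw [ray_eq ν γ hγ hs]
    -- now compute the RHS
    have e1 : ((s:ℂ) * γ) / γ = (s:ℂ) := mul_div_cancel_right₀ _ hγ0
    have e2 : γ * ((s:ℂ) * γ) = (s:ℂ) * γ ^ (2:ℕ) := by ring
    have e3 : ((s:ℂ) * γ ^ (2:ℕ)) ^ ((1:ℂ)/2)
        = ((Real.sqrt s : ℝ) : ℂ) * γ := by
      rw [sqrt_mul_ofReal hs (pow_ne_zero 2 hγ0), sqrt_sq hγ]
      congr 1
      rw [← ofReal_sqrt_cpow hs 1, Complex.cpow_one]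
    rw [e1, e2, e3, besselK_two_mul]
    ring
  have hEq := hfa.eqOn_of_preconnected_of_frequently_eq hga hUp (show γ ∈ U from hγ)
    (hlim.frequently (Filter.Frequently.of_forall heqray))
  have := hEq (show β ∈ U from hβ)
  simpa using this
end
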